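/- Let A be a Banach algebra that is a left ideal in its bidual A** (first Arens product), and suppose A** has a left unit element e belonging to the weak left topological center Z̃₁ˡ(A**). Then A is reflexive. -/

import Mathlib

open NormedSpace ContinuousLinearMap

noncomputable section

/-- Shortcut instance (port to current Mathlib): the dual of a real normed space is normed. -/
instance strongDualRealNormedAddCommGroup (X : Type*) [NormedAddCommGroup X] [NormedSpace ℝ X] :
    NormedAddCommGroup (StrongDual ℝ X) :=
  inferInstance

/-- Shortcut instance (port to current Mathlib): the dual of a real normed space is a normed space. -/
instance strongDualRealNormedSpace (X : Type*) [NormedAddCommGroup X] [NormedSpace ℝ X] :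
    NormedSpace ℝ (StrongDual ℝ X) :=
  inferInstance

section Core

variable (X Y Z : Type*)
  [NormedAddCommGroup X] [NormedSpace ℝ X]
  [NormedAddCommGroup Y] [NormedSpace ℝ Y]
  [NormedAddCommGroup Z] [NormedSpace ℝ Z]

/-- The dual (adjoint) map of a continuous linear map. -/
def dualMapCLM (T : X →L[ℝ] Y) : StrongDual ℝ Y →L[ℝ] StrongDual ℝ X :=
  (ContinuousLinearMap.compSL X Y ℝ (RingHom.id ℝ) (RingHom.id ℝ)).flip T

variable {X Y Z}

/-- The adjoint of a continuous bilinear map `m : X × Y → Z`, as a bilinear map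
`Z* × X → Y*`, `⟨adjBil m z' x, y⟩ = ⟨z', m x y⟩`. -/
def adjBil (m : X →L[ℝ] Y →L[ℝ] Z) : StrongDual ℝ Z →L[ℝ] X →L[ℝ] StrongDual ℝ Y :=
  ((ContinuousLinearMap.compSL X (Y →L[ℝ] Z) (StrongDual ℝ Y) (RingHom.id ℝ) (RingHom.id ℝ)).flip m).comp
    (ContinuousLinearMap.compSL Y Z ℝ (RingHom.id ℝ) (RingHom.id ℝ))

/-- The first Arens extension of a continuous bilinear map `X × Y → Z`
to the biduals, `X** × Y** → Z**`. -/
def arensExt (m : X →L[ℝ] Y →L[ℝ] Z) :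
    StrongDual ℝ (StrongDual ℝ X) →L[ℝ] StrongDual ℝ (StrongDual ℝ Y) →L[ℝ] StrongDual ℝ (StrongDual ℝ Z) :=
  adjBil (adjBil (adjBil m))

variable (E : Type*) [NormedAddCommGroup E] [NormedSpace ℝ E]

/-- The weak-* topology on the bidual `E**`, i.e. the topology of pointwise
convergence on `E*`. -/
def weakStarTop : TopologicalSpace (StrongDual ℝ (StrongDual ℝ E)) :=
  ⨅ f : StrongDual ℝ E, TopologicalSpace.induced (fun F => F f) inferInstance

/-- The weak topology on the bidual `E**`, i.e. the topology of pointwise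
convergence on `E***`. -/
def weakTop : TopologicalSpace (StrongDual ℝ (StrongDual ℝ E)) :=
  ⨅ Φ : StrongDual ℝ (StrongDual ℝ (StrongDual ℝ E)), TopologicalSpace.induced (fun F => Φ F) inferInstance

end Core

/-- Shortcut instance (port to current Mathlib): the dual of a real normed algebra is normed. -/
instance strongDualRealNormedAddCommGroupOfRing (X : Type*) [NonUnitalNormedRing X]
    [NormedSpace ℝ X] : NormedAddCommGroup (StrongDual ℝ X) :=
  inferInstance

/-- Shortcut instance (port to current Mathlib): the dual of a real normed algebra is a normed
space. -/
instance strongDualRealNormedSpaceOfRing (X : Type*) [NonUnitalNormedRing X] [NormedSpace ℝ X] :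
    NormedSpace ℝ (StrongDual ℝ X) :=
  inferInstance

section Algebra

variable (A : Type*) [NonUnitalNormedRing A] [NormedSpace ℝ A]
  [IsScalarTower ℝ A A] [SMulCommClass ℝ A A]

/-- The first Arens product on the bidual of a Banach algebra. -/
def arens1 : StrongDual ℝ (StrongDual ℝ A) →L[ℝ] StrongDual ℝ (StrongDual ℝ A) →L[ℝ] StrongDual ℝ (StrongDual ℝ A) :=
  arensExt (ContinuousLinearMap.mul ℝ A)

/-- The second Arens product on the bidual of a Banach algebra. -/
def arens2 (F G : StrongDual ℝ (StrongDual ℝ A)) : StrongDual ℝ (StrongDual ℝ A) :=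
  arensExt ((ContinuousLinearMap.mul ℝ A).flip) G F

/-- The weak left topological center of `A**`: those `F` such that
`G ↦ F □ G` is weak-*-to-weak continuous. -/
def weakLeftCenter : Set (StrongDual ℝ (StrongDual ℝ A)) :=
  { F | ∀ Φ : StrongDual ℝ (StrongDual ℝ (StrongDual ℝ A)),
      @Continuous _ _ (weakStarTop A) _ fun G => Φ (arens1 A F G) }

/-- The left topological center of `A**`: those `F` such that
`G ↦ F □ G` is weak-*-to-weak-* continuous. -/
def leftCenter : Set (StrongDual ℝ (StrongDual ℝ A)) :=
  { F | ∀ f : StrongDual ℝ A,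
      @Continuous _ _ (weakStarTop A) _ fun G => arens1 A F G f }

end Algebra


/-- A linear functional on `E**` which is weak-* continuous is evaluation at some `f ∈ E*`. -/
theorem weakStar_continuous_functional_is_eval
    (E : Type*) [NormedAddCommGroup E] [NormedSpace ℝ E]
    (φ : StrongDual ℝ (StrongDual ℝ (StrongDual ℝ E)))
    (hc : @Continuous _ _ (weakStarTop E) _ fun G => φ G) :
    ∃ f : StrongDual ℝ E, ∀ F : StrongDual ℝ (StrongDual ℝ E), φ F = F f := by
  classical
  -- the weak-* topology is induced from the product topology
  set ι : StrongDual ℝ (StrongDual ℝ E) → ((StrongDual ℝ E) → ℝ) := fun F f => F f with hι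
  have htop : weakStarTop E = TopologicalSpace.induced ι Pi.topologicalSpace := by
    rw [weakStarTop, Pi.topologicalSpace, induced_iInf]
    refine iInf_congr fun f => ?_
    rw [show (fun F : StrongDual ℝ (StrongDual ℝ E) => F f) = (fun g : (StrongDual ℝ E) → ℝ => g f) ∘ ι from rfl]
    exact induced_compose.symm
  -- continuity at 0 produces a finite set of functionals controlling φ
  have h0 : φ 0 = 0 := map_zero φ
  have hball : φ ⁻¹' Metric.ball (0 : ℝ) 1 ∈ @nhds _ (weakStarTop E) 0 := by
    have := @Continuous.tendsto _ _ (weakStarTop E) _ _ hc 0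
    rw [h0] at this
    exact this (Metric.ball_mem_nhds _ one_pos)
  rw [htop, nhds_induced] at hball
  obtain ⟨U, hU, hUsub⟩ := hball
  have hι0 : ι 0 = 0 := by ext f; simp [hι]
  rw [hι0, nhds_pi] at hU
  obtain ⟨I, hIfin, V, hV, hIV⟩ := Filter.mem_pi.1 hU
  have : Finite ↥I := hIfin.to_subtype
  -- the evaluation functionals at elements of I
  set L : ↥I → (StrongDual ℝ (StrongDual ℝ E)) →ₗ[ℝ] ℝ :=
    fun i => (inclusionInDoubleDual ℝ (StrongDual ℝ E) i.1).toLinearMap with hL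
  have hker : ⨅ i, LinearMap.ker (L i) ≤ LinearMap.ker (φ : (StrongDual ℝ (StrongDual ℝ E)) →ₗ[ℝ] ℝ) := by
    intro F hF
    rw [Submodule.mem_iInf] at hF
    have hFI : ∀ f ∈ I, F f = 0 := by
      intro f hf
      have := hF ⟨f, hf⟩
      simpa [hL, NormedSpace.dual_def] using this
    have key : ∀ c : ℝ, |φ (c • F)| < 1 := by
      intro c
      have hmem : ι (c • F) ∈ I.pi V := by
        intro f hf
        have : (c • F) f = 0 := by
          simp [hFI f hf]
        simpa [hι, this] using mem_of_mem_nhds (hV f)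
      have := hUsub (hIV hmem)
      simpa [Real.dist_eq, abs_mul] using this
    rw [LinearMap.mem_ker]
    by_contra hne
    have h1 := key (1 / |φ F|)
    rw [map_smul] at h1
    have : |(1 / |φ F|) • φ F| = 1 := by
      have habs : |φ F| ≠ 0 := abs_ne_zero.2 hne
      rw [smul_eq_mul, abs_mul, abs_div, abs_abs, abs_one, div_mul_eq_mul_div, one_mul,
        div_self habs]
    rw [this] at h1
    exact lt_irrefl _ h1
  have hspan := mem_span_of_iInf_ker_le_ker hker
  -- the span of evaluation functionals is contained in the range of the canonical map
  set ev : StrongDual ℝ E →ₗ[ℝ] ((StrongDual ℝ (StrongDual ℝ E)) →ₗ[ℝ] ℝ) :=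
    (ContinuousLinearMap.coeLM ℝ).comp (inclusionInDoubleDual ℝ (StrongDual ℝ E)).toLinearMap with hev
  have hle : Submodule.span ℝ (Set.range L) ≤ LinearMap.range ev := by
    rw [Submodule.span_le]
    rintro _ ⟨i, rfl⟩
    exact ⟨i.1, rfl⟩
  obtain ⟨f, hf⟩ := hle hspan
  refine ⟨f, fun F => ?_⟩
  have := congrFun (congrArg (fun (g : (StrongDual ℝ (StrongDual ℝ E)) →ₗ[ℝ] ℝ) => (g : _ → ℝ)) hf) F
  simpa [hev, NormedSpace.dual_def] using this.symm

/-- If `A` is a left ideal in `A**` and `A**` has a left unit belonging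
to the weak left topological center, then `A` is reflexive. -/
theorem stmt4 (A : Type*) [NonUnitalNormedRing A] [NormedSpace ℝ A]
    [IsScalarTower ℝ A A] [SMulCommClass ℝ A A] [CompleteSpace A]
    (hideal : ∀ (a : A) (F : StrongDual ℝ (StrongDual ℝ A)),
      arens1 A (inclusionInDoubleDual ℝ A a) F ∈ Set.range (inclusionInDoubleDual ℝ A))
    (e : StrongDual ℝ (StrongDual ℝ A))
    (hunit : ∀ F : StrongDual ℝ (StrongDual ℝ A), arens1 A e F = F)
    (he : e ∈ weakLeftCenter A) :
    Function.Surjective (inclusionInDoubleDual ℝ A) := by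
  classical
  intro F₀
  by_contra h
  push_neg at h
  set J := inclusionInDoubleDual ℝ A with hJ
  have hnm : F₀ ∉ Set.range J := by
    rintro ⟨a, rfl⟩; exact h a rfl
  -- range of J is closed and convex
  have hcl : IsClosed (Set.range J) := by
    have hiso : Isometry J := (NormedSpace.inclusionInDoubleDualLi ℝ (E := A)).isometry
    exact hiso.isClosedEmbedding.isClosed_range
  have hconv : Convex ℝ (Set.range J) := by
    rintro x ⟨xa, rfl⟩ y ⟨ya, rfl⟩ s t _ _ _
    exact ⟨s • xa + t • ya, by simp [map_add, map_smul]⟩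
  obtain ⟨f, u, hfu, hub⟩ := geometric_hahn_banach_point_closed hconv hcl hnm
  have hu0 : u < 0 := by
    have := hub (J 0) ⟨0, rfl⟩
    simpa using this
  have hvan : ∀ a : A, f (J a) = 0 := by
    intro a
    by_contra hfa
    have hmem : ((u - 1) / f (J a)) • J a ∈ Set.range J :=
      ⟨((u - 1) / f (J a)) • a, by simp [map_smul]⟩
    have := hub _ hmem
    rw [map_smul, smul_eq_mul, div_mul_cancel₀ _ hfa] at this
    linarith
  -- f is weak-* continuous since e is a left unit in the weak left center
  have hc : @Continuous _ _ (weakStarTop A) _ fun G => f G := by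
    have := he f
    simpa only [hunit] using this
  obtain ⟨g, hg⟩ := weakStar_continuous_functional_is_eval A f hc
  have hg0 : g = 0 := by
    ext a
    have := hg (J a)
    rw [hvan a] at this
    simpa [hJ, NormedSpace.dual_def] using this.symm
  have : f F₀ = 0 := by rw [hg F₀, hg0, map_zero]
  linarith

end
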